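/- Pairwise exchangeability for the response: if y = Xβ + z with z ~ N(0, σ²Iₙ), then for any subset S ⊆ {1,…,p} consisting only of null features (β_j = 0 for all j ∈ S), the random vector ([X X̃]_swap(S))ᵀ y has the same distribution as [X X̃]ᵀ y. -/

import Mathlib

open Matrix MeasureTheory ProbabilityTheory

open scoped ENNReal NNReal

open Finset in
lemma aux_lmarginal_prod {δ : Type*} [Fintype δ] [DecidableEq δ]
    (μ : δ → Measure ℝ) [∀ i, SigmaFinite (μ i)]
    (F : δ → ℝ → ℝ≥0∞) (hF : ∀ i, Measurable (F i)) (s : Finset δ) (x : δ → ℝ) :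
    (∫⋯∫⁻_s, (fun y => ∏ i, F i (y i)) ∂μ) x
      = (∏ i ∈ s, ∫⁻ t, F i t ∂μ i) * ∏ i ∈ sᶜ, F i (x i) := by
  classical
  have hmeas : Measurable (fun y : δ → ℝ => ∏ i, F i (y i)) :=
    Finset.measurable_prod _ (fun i _ => (hF i).comp (measurable_pi_apply i))
  induction s using Finset.induction generalizing x with
  | empty => simp [MeasureTheory.lmarginal_empty]
  | @insert i s hi ih =>
    rw [MeasureTheory.lmarginal_insert _ hmeas hi]
    have hstep : ∀ xi : ℝ,
        (∫⋯∫⁻_s, (fun y => ∏ j, F j (y j)) ∂μ) (Function.update x i xi)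
          = ((∏ j ∈ s, ∫⁻ t, F j t ∂μ j) * ∏ j ∈ sᶜ.erase i, F j (x j)) * F i xi := by
      intro xi
      rw [ih]
      have hi' : i ∈ sᶜ := Finset.mem_compl.mpr hi
      rw [← Finset.mul_prod_erase _ _ hi']
      have : ∏ j ∈ sᶜ.erase i, F j (Function.update x i xi j)
          = ∏ j ∈ sᶜ.erase i, F j (x j) := by
        refine Finset.prod_congr rfl fun j hj => ?_
        rw [Function.update_of_ne (Finset.ne_of_mem_erase hj)]
      rw [Function.update_self, this]
      ring
    simp_rw [hstep]
    rw [lintegral_const_mul _ (hF i), Finset.prod_insert hi, Finset.compl_insert]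
    ring

lemma aux_lintegral_pi_prod {δ : Type*} [Fintype δ] [DecidableEq δ]
    (μ : δ → Measure ℝ) [∀ i, SigmaFinite (μ i)]
    (F : δ → ℝ → ℝ≥0∞) (hF : ∀ i, Measurable (F i)) :
    ∫⁻ x, ∏ i, F i (x i) ∂Measure.pi μ = ∏ i, ∫⁻ t, F i t ∂μ i := by
  refine Eq.trans (MeasureTheory.lintegral_eq_lmarginal_univ (μ := μ) (0 : δ → ℝ)) ?_
  rw [aux_lmarginal_prod μ F hF Finset.univ]
  simp

lemma aux_pi_gaussian_density {n : ℕ} {v : ℝ≥0} (hv : v ≠ 0) :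
    (Measure.pi fun _ : Fin n => gaussianReal 0 v)
      = (volume : Measure (Fin n → ℝ)).withDensity
          (fun x => ∏ i, gaussianPDF 0 v (x i)) := by
  classical
  refine Measure.pi_eq (μ := fun _ : Fin n => gaussianReal 0 v) fun s hs => ?_
  have hbox : MeasurableSet (Set.pi Set.univ s) := MeasurableSet.univ_pi hs
  rw [withDensity_apply _ hbox]
  have hind : ∀ x : Fin n → ℝ,
      Set.indicator (Set.pi Set.univ s) (fun x => ∏ i, gaussianPDF 0 v (x i)) x
        = ∏ i, Set.indicator (s i) (gaussianPDF 0 v) (x i) := by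
    intro x
    by_cases hx : x ∈ Set.pi Set.univ s
    · rw [Set.indicator_of_mem hx]
      exact (Finset.prod_congr rfl fun i _ =>
        (Set.indicator_of_mem (hx i (Set.mem_univ i)) _).symm)
    · rw [Set.indicator_of_notMem hx]
      have : ¬ ∀ i ∈ Set.univ, x i ∈ s i := fun h => hx (Set.mem_pi.mpr h)
      push_neg at this
      obtain ⟨i, _, hi⟩ := this
      exact (Finset.prod_eq_zero (Finset.mem_univ i)
        (Set.indicator_of_notMem hi _)).symm
  rw [← lintegral_indicator hbox]
  simp_rw [hind]
  rw [show (volume : Measure (Fin n → ℝ)) = Measure.pi fun _ => volume from volume_pi]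
  rw [aux_lintegral_pi_prod _ _ (fun i => (measurable_gaussianPDF 0 v).indicator (hs i))]
  refine Finset.prod_congr rfl fun i _ => ?_
  rw [lintegral_indicator (hs i), gaussianReal_of_var_ne_zero 0 hv, withDensity_apply _ (hs i)]

lemma aux_map_withDensity {α : Type*} [MeasurableSpace α] (e : α ≃ᵐ α) (μ : Measure α)
    (g : α → ℝ≥0∞) (hg : Measurable g) :
    Measure.map e (μ.withDensity (fun x => g (e x))) = (Measure.map e μ).withDensity g := by
  ext s hs
  rw [Measure.map_apply e.measurable hs, withDensity_apply _ (e.measurable hs),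
    withDensity_apply _ hs, setLIntegral_map hs hg e.measurable]

lemma aux_gaussian_map_orth {n : ℕ} {v : ℝ≥0} (hv : v ≠ 0)
    (W : Matrix (Fin n) (Fin n) ℝ) (hW : Wᵀ * W = 1) :
    Measure.map (fun x => W.mulVec x) (Measure.pi fun _ : Fin n => gaussianReal 0 v)
      = Measure.pi fun _ : Fin n => gaussianReal 0 v := by
  classical
  have hWW : W * Wᵀ = 1 := mul_eq_one_comm.mp hW
  have hmeas : ∀ M : Matrix (Fin n) (Fin n) ℝ, Measurable fun x => M.mulVec x := by
    intro M
    have := (LinearMap.continuous_on_pi (Matrix.mulVecLin M)).measurable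
    exact this
  let e : (Fin n → ℝ) ≃ᵐ (Fin n → ℝ) :=
    { toFun := W.mulVec
      invFun := Wᵀ.mulVec
      left_inv := fun x => by rw [Matrix.mulVec_mulVec, hW, Matrix.one_mulVec]
      right_inv := fun x => by rw [Matrix.mulVec_mulVec, hWW, Matrix.one_mulVec]
      measurable_toFun := hmeas W
      measurable_invFun := hmeas Wᵀ }
  have hsq : ∀ x : Fin n → ℝ, ∑ i, (W.mulVec x i) ^ 2 = ∑ i, x i ^ 2 := by
    intro x
    have hdd : ∀ u : Fin n → ℝ, ∑ i, u i ^ 2 = u ⬝ᵥ u := by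
      intro u; simp [dotProduct, sq]
    rw [hdd, hdd, Matrix.dotProduct_mulVec, ← Matrix.mulVec_transpose,
      Matrix.mulVec_mulVec, hW, Matrix.one_mulVec]
  set g : (Fin n → ℝ) → ℝ≥0∞ := fun x => ∏ i, gaussianPDF 0 v (x i) with hgdef
  have hg : Measurable g :=
    Finset.measurable_prod _ fun i _ => (measurable_gaussianPDF 0 v).comp (measurable_pi_apply i)
  have hprod : ∀ u : Fin n → ℝ, ∏ i, gaussianPDFReal 0 v (u i)
      = ((Real.sqrt (2 * Real.pi * v))⁻¹) ^ n * Real.exp (∑ i, -(u i ^ 2) / (2 * v)) := by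
    intro u
    simp [gaussianPDFReal, Finset.prod_mul_distrib, Real.exp_sum, Finset.prod_const]
  have hcomp : (fun x => g (e x)) = g := by
    funext x
    show (∏ i, gaussianPDF 0 v (W.mulVec x i)) = ∏ i, gaussianPDF 0 v (x i)
    simp only [gaussianPDF]
    rw [← ENNReal.ofReal_prod_of_nonneg (fun i _ => gaussianPDFReal_nonneg 0 v ((W.mulVec x) i)),
      ← ENNReal.ofReal_prod_of_nonneg (fun i _ => gaussianPDFReal_nonneg 0 v (x i)),
      hprod, hprod]
    congr 2
    rw [← Finset.sum_div, ← Finset.sum_div]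
    congr 2
    simpa using congrArg Neg.neg (hsq x)
  have h1 : W.det * W.det = 1 := by
    have := congrArg Matrix.det hW
    rwa [Matrix.det_mul, Matrix.det_transpose, Matrix.det_one] at this
  have hdet : W.det ≠ 0 := by
    intro h; rw [h, mul_zero] at h1; exact zero_ne_one h1
  have habs : |(W.det)⁻¹| = 1 := by
    rcases mul_self_eq_one_iff.mp h1 with h | h <;> rw [h] <;> norm_num
  have hvol : Measure.map (⇑e) (volume : Measure (Fin n → ℝ)) = volume := by
    have hcoe : ⇑e = ⇑(Matrix.toLin' W) := funext fun x => (Matrix.toLin'_apply W x).symm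
    rw [hcoe, Real.map_matrix_volume_pi_eq_smul_volume_pi hdet, habs, ENNReal.ofReal_one,
      one_smul]
  rw [aux_pi_gaussian_density hv]
  show Measure.map (⇑e) (volume.withDensity g) = volume.withDensity g
  calc Measure.map (⇑e) (volume.withDensity g)
      = Measure.map (⇑e) (volume.withDensity (fun x => g (e x))) := by rw [hcomp]
    _ = (Measure.map (⇑e) volume).withDensity g := aux_map_withDensity e volume g hg
    _ = volume.withDensity g := by rw [hvol]

open scoped RealInnerProductSpace in
lemma aux_exists_orth {n : ℕ} {q : Type*} [Fintype q] [DecidableEq q]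
    (A B : Matrix (Fin n) q ℝ) (hAB : Aᵀ * A = Bᵀ * B) :
    ∃ U : Matrix (Fin n) (Fin n) ℝ, Uᵀ * U = 1 ∧ A = U * B := by
  classical
  set la := Matrix.toEuclideanLin A with hla
  set lb := Matrix.toEuclideanLin B with hlb
  have hkey : ∀ (M : Matrix (Fin n) q ℝ) (v w : q → ℝ),
      (M *ᵥ v) ⬝ᵥ (M *ᵥ w) = ((Mᵀ * M) *ᵥ v) ⬝ᵥ w := by
    intro M v w
    rw [Matrix.dotProduct_mulVec, ← Matrix.mulVec_transpose, Matrix.mulVec_mulVec]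
  have hinner : ∀ v w : EuclideanSpace ℝ q, ⟪la v, la w⟫ = ⟪lb v, lb w⟫ := by
    intro v w
    have h1 : ∀ (M : Matrix (Fin n) q ℝ),
        ⟪Matrix.toEuclideanLin M v, Matrix.toEuclideanLin M w⟫
          = ((Mᵀ * M) *ᵥ (WithLp.equiv 2 _ v)) ⬝ᵥ (WithLp.equiv 2 _ w) := by
      intro M
      rw [← hkey]
      simp [PiLp.inner_apply, Matrix.toEuclideanLin_apply, dotProduct, mul_comm]
    rw [hla, hlb, h1, h1, hAB]
  have hnorm : ∀ v : EuclideanSpace ℝ q, ‖la v‖ = ‖lb v‖ := by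
    intro v
    have h2 := hinner v v
    rw [real_inner_self_eq_norm_sq, real_inner_self_eq_norm_sq] at h2
    exact (sq_eq_sq₀ (norm_nonneg _) (norm_nonneg _)).mp h2
  have hker : LinearMap.ker lb ≤ LinearMap.ker la := by
    intro v hv
    rw [LinearMap.mem_ker] at hv ⊢
    have := hnorm v
    rw [hv, norm_zero, norm_eq_zero] at this
    exact this
  set F0 : ↥(LinearMap.range lb) →ₗ[ℝ] EuclideanSpace ℝ (Fin n) :=
    ((LinearMap.ker lb).liftQ la hker).comp lb.quotKerEquivRange.symm.toLinearMap with hF0def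
  have hF0 : ∀ (v : EuclideanSpace ℝ q) (h : lb v ∈ LinearMap.range lb),
      F0 ⟨lb v, h⟩ = la v := by
    intro v h
    show ((LinearMap.ker lb).liftQ la hker) (lb.quotKerEquivRange.symm ⟨lb v, h⟩) = la v
    rw [LinearMap.quotKerEquivRange_symm_apply_image, Submodule.mkQ_apply,
      Submodule.liftQ_apply]
  set F : ↥(LinearMap.range lb) →ₗᵢ[ℝ] EuclideanSpace ℝ (Fin n) :=
    ⟨F0, by
      rintro ⟨x, hx⟩
      obtain ⟨v, rfl⟩ := hx
      show ‖F0 ⟨lb v, _⟩‖ = ‖(lb v : EuclideanSpace ℝ (Fin n))‖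
      refine (congrArg norm (hF0 v (LinearMap.mem_range_self lb v))).trans ?_
      exact hnorm v⟩ with hFdef
  set U' := F.extend with hU'def
  have hU' : ∀ v : EuclideanSpace ℝ q, U' (lb v) = la v := by
    intro v
    have h3 := LinearIsometry.extend_apply F ⟨lb v, LinearMap.mem_range_self lb v⟩
    rw [← hU'def] at h3
    have h4 : F ⟨lb v, LinearMap.mem_range_self lb v⟩ = la v := hF0 v _
    rw [h4] at h3
    exact h3
  set U := Matrix.toEuclideanLin.symm U'.toLinearMap with hUdef
  have hUt : Matrix.toEuclideanLin U = U'.toLinearMap := by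
    rw [hUdef]; exact LinearEquiv.apply_symm_apply _ _
  have hA : A = U * B := by
    apply Matrix.toEuclideanLin.injective
    apply LinearMap.ext
    intro v
    have h2 : Matrix.toEuclideanLin (U * B) v
        = Matrix.toEuclideanLin U (Matrix.toEuclideanLin B v) := by
      simp [Matrix.toEuclideanLin_apply, Matrix.mulVec_mulVec]
    rw [h2, hUt]
    exact (hU' v).symm
  refine ⟨U, ?_, hA⟩
  ext i j
  have h5 := U'.inner_map_map (EuclideanSpace.single i (1:ℝ)) (EuclideanSpace.single j (1:ℝ))
  have hcoord : ∀ (i0 : Fin n), (fun k => U' (EuclideanSpace.single i0 (1:ℝ)) k)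
      = fun k => U k i0 := by
    intro i0
    funext k
    have : U' (EuclideanSpace.single i0 (1:ℝ))
        = Matrix.toEuclideanLin U (EuclideanSpace.single i0 (1:ℝ)) := by rw [hUt]; rfl
    rw [this]
    simp [Matrix.toEuclideanLin_apply, Matrix.mulVec, dotProduct,
      EuclideanSpace.single_apply, Finset.sum_ite_eq]
  rw [PiLp.inner_apply] at h5
  simp only [RCLike.inner_apply, starRingEnd_apply, star_trivial] at h5
  have h6 : ∑ k, (U' (EuclideanSpace.single i (1:ℝ)) k) * (U' (EuclideanSpace.single j (1:ℝ)) k)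
      = ∑ k, U k i * U k j := by
    refine Finset.sum_congr rfl fun k _ => ?_
    rw [congrFun (hcoord i) k, congrFun (hcoord j) k]
  rw [show ∑ k, (U' (EuclideanSpace.single j (1:ℝ))) k * (U' (EuclideanSpace.single i (1:ℝ))) k = ∑ k, (U' (EuclideanSpace.single i (1:ℝ))) k * (U' (EuclideanSpace.single j (1:ℝ))) k from Finset.sum_congr rfl fun k _ => mul_comm _ _, h6] at h5
  rw [Matrix.mul_apply, Matrix.one_apply]
  simp only [Matrix.transpose_apply]
  rw [h5]
  simp [EuclideanSpace.inner_single_left, EuclideanSpace.single_apply, eq_comm]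

lemma aux_measurable_mulVec {m k : Type*} [Fintype k] (M : Matrix m k ℝ) :
    Measurable (M.mulVec) := by
  rw [measurable_pi_iff]
  intro i
  show Measurable fun x => M.mulVec x i
  simp only [Matrix.mulVec, dotProduct]
  exact Finset.measurable_sum _ fun j _ => (measurable_pi_apply j).const_mul _

lemma aux_law_affine {n : ℕ} {q : Type*} [Fintype q] [DecidableEq q]
    {Ω : Type*} [MeasurableSpace Ω] (μ : Measure Ω) {v : ℝ≥0} (hv : v ≠ 0)
    (z : Ω → Fin n → ℝ) (hz : Measurable z)
    (hzlaw : Measure.map z μ = Measure.pi fun _ : Fin n => gaussianReal 0 v)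
    (A B : Matrix (Fin n) q ℝ) (hAB : Aᵀ * A = Bᵀ * B) (c : q → ℝ) :
    Measure.map (fun ω => c + Aᵀ.mulVec (z ω)) μ
      = Measure.map (fun ω => c + Bᵀ.mulVec (z ω)) μ := by
  obtain ⟨U, hU, hA⟩ := aux_exists_orth A B hAB
  have hBm : Measurable fun w : Fin n → ℝ => c + Bᵀ.mulVec w :=
    measurable_const.add (aux_measurable_mulVec Bᵀ)
  have hUm : Measurable fun w : Fin n → ℝ => Uᵀ.mulVec w := aux_measurable_mulVec Uᵀ
  have hUorth : (Uᵀ)ᵀ * Uᵀ = 1 := by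
    rw [Matrix.transpose_transpose]
    exact mul_eq_one_comm.mp hU
  have h1 : (fun ω => c + Aᵀ.mulVec (z ω))
      = (fun w => c + Bᵀ.mulVec w) ∘ (fun w => Uᵀ.mulVec w) ∘ z := by
    funext ω
    simp only [Function.comp_apply, hA, Matrix.transpose_mul, Matrix.mulVec_mulVec]
  have h2 : (fun ω => c + Bᵀ.mulVec (z ω)) = (fun w => c + Bᵀ.mulVec w) ∘ z := rfl
  rw [h1, h2, ← Function.comp_assoc, ← Measure.map_map (hBm.comp hUm) hz,
    ← Measure.map_map hBm hz, ← Measure.map_map hBm hUm, hzlaw,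
    aux_gaussian_map_orth hv Uᵀ hUorth]

/-- The augmented design `[X X̃]`: the `n × 2p` columnwise concatenation of `X` and `X̃`. -/
def knockoffAug {n p : ℕ} (X Xt : Matrix (Fin n) (Fin p) ℝ) :
    Matrix (Fin n) (Fin p ⊕ Fin p) ℝ :=
  Matrix.fromCols X Xt

/-- `[X X̃]_swap(S)`: the augmented design with columns `X_j` and `X̃_j` exchanged
for each `j ∈ S`. -/
def knockoffSwap {n p : ℕ} (X Xt : Matrix (Fin n) (Fin p) ℝ) (S : Finset (Fin p)) :
    Matrix (Fin n) (Fin p ⊕ Fin p) ℝ :=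
  Matrix.fromCols
    (Matrix.of fun i j => if j ∈ S then Xt i j else X i j)
    (Matrix.of fun i j => if j ∈ S then X i j else Xt i j)

/-- **Pairwise exchangeability for the response** (Lemma 3): if `X̃` is a knockoff
matrix for `X` (`X̃ᵀX̃ = XᵀX = Σ`, `XᵀX̃ = Σ − diag{s}`) and `y = Xβ + z` with
`z ~ N(0, σ²Iₙ)`, then for any subset `S` consisting only of null features
(`β_j = 0` for all `j ∈ S`), the random vector `([X X̃]_swap(S))ᵀ y` has the same
distribution as `[X X̃]ᵀ y`. -/
theorem knockoff_swap_response_exchangeable {n p : ℕ}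
    {Ω : Type*} [MeasurableSpace Ω] (μ : Measure Ω) [IsProbabilityMeasure μ]
    (X Xt : Matrix (Fin n) (Fin p) ℝ) (s : Fin p → ℝ)
    (h1 : Xtᵀ * Xt = Xᵀ * X)
    (h2 : Xᵀ * Xt = Xᵀ * X - Matrix.diagonal s)
    (β : Fin p → ℝ) (σ : ℝ) (hσ : 0 < σ)
    (z : Ω → Fin n → ℝ) (hz : Measurable z)
    (hzlaw : Measure.map z μ = Measure.pi fun _ : Fin n => gaussianReal 0 ⟨σ ^ 2, sq_nonneg σ⟩)
    (y : Ω → Fin n → ℝ) (hy : ∀ ω, y ω = X.mulVec β + z ω)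
    (S : Finset (Fin p)) (hSnull : ∀ j ∈ S, β j = 0) :
    Measure.map (fun ω => (knockoffSwap X Xt S)ᵀ.mulVec (y ω)) μ
      = Measure.map (fun ω => (knockoffAug X Xt)ᵀ.mulVec (y ω)) μ := by
  classical
  have e1 : ∀ a b, ∑ i, Xt i a * Xt i b = ∑ i, X i a * X i b := by
    intro a b
    have := congrFun (congrFun h1 a) b
    simpa [Matrix.mul_apply, Matrix.transpose_apply] using this
  have e2 : ∀ a b, ∑ i, X i a * Xt i b
      = ∑ i, X i a * X i b - Matrix.diagonal s a b := by
    intro a b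
    have := congrFun (congrFun h2 a) b
    simpa [Matrix.mul_apply, Matrix.transpose_apply, Matrix.sub_apply] using this
  have h2' : Xtᵀ * X = Xᵀ * X - Matrix.diagonal s := by
    have := congrArg Matrix.transpose h2
    simp only [Matrix.transpose_mul, Matrix.transpose_sub, Matrix.transpose_transpose,
      Matrix.diagonal_transpose] at this
    exact this
  have e3 : ∀ a b, ∑ i, Xt i a * X i b
      = ∑ i, X i a * X i b - Matrix.diagonal s a b := by
    intro a b
    have := congrFun (congrFun h2' a) b
    simpa [Matrix.mul_apply, Matrix.transpose_apply, Matrix.sub_apply] using this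
  have hswap_apply : ∀ (i : Fin n) (a : Fin p ⊕ Fin p), knockoffSwap X Xt S i a
      = Sum.elim (fun j => if j ∈ S then Xt i j else X i j)
        (fun j => if j ∈ S then X i j else Xt i j) a := fun i a => rfl
  have haug_apply : ∀ (i : Fin n) (a : Fin p ⊕ Fin p), knockoffAug X Xt i a
      = Sum.elim (X i) (Xt i) a := fun i a => rfl
  have hGram : (knockoffSwap X Xt S)ᵀ * (knockoffSwap X Xt S)
      = (knockoffAug X Xt)ᵀ * (knockoffAug X Xt) := by
    ext a b
    simp only [Matrix.mul_apply, Matrix.transpose_apply, hswap_apply, haug_apply]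
    cases a with
    | inl ja =>
      cases b with
      | inl jb =>
        simp only [Sum.elim_inl]
        by_cases hja : ja ∈ S <;> by_cases hjb : jb ∈ S <;>
          simp only [hja, hjb, if_true, if_false, ite_true, ite_false]
        · exact e1 ja jb
        · have hne : ja ≠ jb := fun h => hjb (h ▸ hja)
          rw [e3 ja jb, Matrix.diagonal_apply_ne _ hne, sub_zero]
        · have hne : ja ≠ jb := fun h => hja (h ▸ hjb)
          rw [e2 ja jb, Matrix.diagonal_apply_ne _ hne, sub_zero]
      | inr jb =>
        simp only [Sum.elim_inl, Sum.elim_inr]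
        by_cases hja : ja ∈ S <;> by_cases hjb : jb ∈ S <;>
          simp only [hja, hjb, if_true, if_false, ite_true, ite_false]
        · rw [e3 ja jb, e2 ja jb]
        · have hne : ja ≠ jb := fun h => hjb (h ▸ hja)
          rw [e1 ja jb, e2 ja jb, Matrix.diagonal_apply_ne _ hne, sub_zero]
        · have hne : ja ≠ jb := fun h => hja (h ▸ hjb)
          rw [e2 ja jb, Matrix.diagonal_apply_ne _ hne, sub_zero]
    | inr ja =>
      cases b with
      | inl jb =>
        simp only [Sum.elim_inl, Sum.elim_inr]
        by_cases hja : ja ∈ S <;> by_cases hjb : jb ∈ S <;>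
          simp only [hja, hjb, if_true, if_false, ite_true, ite_false]
        · rw [e2 ja jb, e3 ja jb]
        · have hne : ja ≠ jb := fun h => hjb (h ▸ hja)
          rw [e3 ja jb, Matrix.diagonal_apply_ne _ hne, sub_zero]
        · have hne : ja ≠ jb := fun h => hja (h ▸ hjb)
          rw [e1 ja jb, e3 ja jb, Matrix.diagonal_apply_ne _ hne, sub_zero]
      | inr jb =>
        simp only [Sum.elim_inr]
        by_cases hja : ja ∈ S <;> by_cases hjb : jb ∈ S <;>
          simp only [hja, hjb, if_true, if_false, ite_true, ite_false]
        · exact (e1 ja jb).symm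
        · have hne : ja ≠ jb := fun h => hjb (h ▸ hja)
          rw [e2 ja jb, Matrix.diagonal_apply_ne _ hne, sub_zero, e1 ja jb]
        · have hne : ja ≠ jb := fun h => hja (h ▸ hjb)
          rw [e3 ja jb, Matrix.diagonal_apply_ne _ hne, sub_zero, e1 ja jb]
  have hdot : ∀ (C : Matrix (Fin n) (Fin p) ℝ) (j : Fin p),
      ∑ i, C i j * (X.mulVec β) i = ∑ k, (∑ i, C i j * X i k) * β k := by
    intro C j
    simp only [Matrix.mulVec, dotProduct, Finset.mul_sum]
    rw [Finset.sum_comm]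
    exact Finset.sum_congr rfl fun k _ => by
      rw [Finset.sum_mul]
      exact Finset.sum_congr rfl fun i _ => by ring
  have hswapcol : ∀ j ∈ S, ∑ i, Xt i j * (X.mulVec β) i = ∑ i, X i j * (X.mulVec β) i := by
    intro j hj
    rw [hdot Xt j, hdot X j]
    have hsub : ∀ k, (∑ i, Xt i j * X i k) * β k
        = (∑ i, X i j * X i k) * β k - Matrix.diagonal s j k * β k := by
      intro k; rw [e3 j k, sub_mul]
    simp_rw [hsub]
    rw [Finset.sum_sub_distrib]
    have hzero : ∑ k, Matrix.diagonal s j k * β k = 0 := by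
      have hterm : ∀ k, Matrix.diagonal s j k * β k = if j = k then s j * β k else 0 := by
        intro k
        by_cases h : j = k
        · subst h; simp [Matrix.diagonal_apply_eq]
        · simp [Matrix.diagonal_apply_ne _ h, h]
      simp_rw [hterm]
      rw [Finset.sum_ite_eq]
      simp [hSnull j hj]
    rw [hzero, sub_zero]
  have hmean : (knockoffSwap X Xt S)ᵀ.mulVec (X.mulVec β)
      = (knockoffAug X Xt)ᵀ.mulVec (X.mulVec β) := by
    funext a
    show ∑ i, (knockoffSwap X Xt S)ᵀ a i * (X.mulVec β) i
        = ∑ i, (knockoffAug X Xt)ᵀ a i * (X.mulVec β) i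
    simp only [Matrix.transpose_apply, hswap_apply, haug_apply]
    cases a with
    | inl j =>
      simp only [Sum.elim_inl]
      by_cases hj : j ∈ S
      · simp only [hj, if_true, ite_true]
        exact hswapcol j hj
      · simp only [hj, if_false, ite_false]
    | inr j =>
      simp only [Sum.elim_inr]
      by_cases hj : j ∈ S
      · simp only [hj, if_true, ite_true]
        exact (hswapcol j hj).symm
      · simp only [hj, if_false, ite_false]
  have hv : (⟨σ ^ 2, sq_nonneg σ⟩ : NNReal) ≠ 0 := by
    intro h
    have h0 : σ ^ 2 = 0 := congrArg NNReal.toReal h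
    exact pow_ne_zero 2 (ne_of_gt hσ) h0
  have hswapfun : (fun ω => (knockoffSwap X Xt S)ᵀ.mulVec (y ω))
      = fun ω => (knockoffAug X Xt)ᵀ.mulVec (X.mulVec β)
          + (knockoffSwap X Xt S)ᵀ.mulVec (z ω) := by
    funext ω
    rw [hy ω, Matrix.mulVec_add, hmean]
  have haugfun : (fun ω => (knockoffAug X Xt)ᵀ.mulVec (y ω))
      = fun ω => (knockoffAug X Xt)ᵀ.mulVec (X.mulVec β)
          + (knockoffAug X Xt)ᵀ.mulVec (z ω) := by
    funext ω
    rw [hy ω, Matrix.mulVec_add]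
  rw [hswapfun, haugfun]
  exact aux_law_affine μ hv z hz hzlaw _ _ hGram _
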